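/- Let S be a maximal triangular subalgebra of B(H), let δ : S → B(H) be a bounded derivation, and let p ∈ lat(S) with p ≠ 0 and p ≠ 1. Then there exists b₁ ∈ B(H) such that b₁ (1 − p) = 0, ‖b₁‖ ≤ ‖δ‖, and δ(a) p = (b₁ a − a b₁) p for all a ∈ S. -/

import Mathlib

set_option maxHeartbeats 1000000
set_option synthInstance.maxHeartbeats 400000

open ContinuousLinearMap in
/-- The diagonal `S ∩ S*` of a subalgebra of `B(H)`. -/
def diagonal {H : Type*} [NormedAddCommGroup H] [InnerProductSpace ℂ H] [CompleteSpace H]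
    (S : Subalgebra ℂ (H →L[ℂ] H)) : Set (H →L[ℂ] H) :=
  {a | a ∈ S ∧ adjoint a ∈ S}

/-- A set of operators is maximal abelian in `B(H)` if it is commutative and contains
every operator commuting with all of its members. -/
def IsMaxAbelian {H : Type*} [NormedAddCommGroup H] [InnerProductSpace ℂ H]
    (D : Set (H →L[ℂ] H)) : Prop :=
  (∀ a ∈ D, ∀ b ∈ D, a * b = b * a) ∧
  (∀ b : H →L[ℂ] H, (∀ a ∈ D, a * b = b * a) → b ∈ D)

/-- A (unital) subalgebra of `B(H)` is triangular if its diagonal `S ∩ S*` is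
maximal abelian in `B(H)`. -/
def IsTriangular {H : Type*} [NormedAddCommGroup H] [InnerProductSpace ℂ H] [CompleteSpace H]
    (S : Subalgebra ℂ (H →L[ℂ] H)) : Prop :=
  IsMaxAbelian (diagonal S)

/-- `S` is maximal triangular if it is triangular and not properly contained in any
other triangular subalgebra. -/
def IsMaxTriangular {H : Type*} [NormedAddCommGroup H] [InnerProductSpace ℂ H] [CompleteSpace H]
    (S : Subalgebra ℂ (H →L[ℂ] H)) : Prop :=
  IsTriangular S ∧ ∀ T : Subalgebra ℂ (H →L[ℂ] H), IsTriangular T → S ≤ T → S = T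

open ContinuousLinearMap in
/-- `p ∈ lat S`: `p` is an orthogonal projection with `a p = p a p` for all `a ∈ S`. -/
def InLat {H : Type*} [NormedAddCommGroup H] [InnerProductSpace ℂ H] [CompleteSpace H]
    (S : Subalgebra ℂ (H →L[ℂ] H)) (p : H →L[ℂ] H) : Prop :=
  p * p = p ∧ adjoint p = p ∧ ∀ a ∈ S, a * p = p * a * p

/-- A bounded derivation from `S` into `B(H)`: a continuous linear map obeying the
Leibniz product rule on `S`. -/
def IsDerivation {H : Type*} [NormedAddCommGroup H] [InnerProductSpace ℂ H] [CompleteSpace H]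
    (S : Subalgebra ℂ (H →L[ℂ] H)) (δ : S →L[ℂ] (H →L[ℂ] H)) : Prop :=
  ∀ a b : S, δ (a * b) = δ a * (b : H →L[ℂ] H) + (a : H →L[ℂ] H) * δ b

section Aux
open ContinuousLinearMap
open scoped ComplexInnerProductSpace

variable {H : Type*} [NormedAddCommGroup H] [InnerProductSpace ℂ H] [CompleteSpace H]

/-- Auxiliary triangular-extension algebra `T = S + p B(H) (1-p)`. -/
def Talg (S : Subalgebra ℂ (H →L[ℂ] H)) (p : H →L[ℂ] H) (hpr : p * p = p) :
    Subalgebra ℂ (H →L[ℂ] H) where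
  carrier := {a | (1-p) * a * p = 0 ∧ p*a*p + (1-p)*a*(1-p) ∈ S}
  mul_mem' := by
    rintro a b ⟨ha1, ha2⟩ ⟨hb1, hb2⟩
    have hpp : ∀ x : H →L[ℂ] H, p * (p * x) = p * x := fun x => by rw [← mul_assoc, hpr]
    have key : (1-p) * (a*b) * p = ((1-p)*a*p)*(p*b*p) + ((1-p)*a*(1-p))*((1-p)*b*p) := by
      simp only [mul_sub, sub_mul, one_mul, mul_one, mul_add, add_mul, smul_mul_assoc,
        mul_smul_comm, smul_smul, mul_assoc, hpp, smul_add, smul_sub]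
      abel
    have key2 : p*(a*b)*p + (1-p)*(a*b)*(1-p)
        = (p*a*p + (1-p)*a*(1-p)) * (p*b*p + (1-p)*b*(1-p))
          + (p*a*(1-p))*((1-p)*b*p) + ((1-p)*a*p)*(p*b*(1-p)) := by
      simp only [mul_sub, sub_mul, one_mul, mul_one, mul_add, add_mul, smul_mul_assoc,
        mul_smul_comm, smul_smul, mul_assoc, hpp, smul_add, smul_sub]
      abel
    refine ⟨?_, ?_⟩
    · rw [key, ha1, hb1]; simp
    · rw [key2, ha1, hb1]
      simpa using S.mul_mem ha2 hb2
  one_mem' := by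
    refine ⟨?_, ?_⟩
    · simp only [mul_one, mul_sub, sub_mul, one_mul, hpr]; abel
    · have : p*1*p + (1-p)*1*(1-p) = (1 : H →L[ℂ] H) := by
        simp only [mul_one, mul_sub, sub_mul, one_mul, hpr]; abel
      rw [this]; exact S.one_mem
  add_mem' := by
    rintro a b ⟨ha1, ha2⟩ ⟨hb1, hb2⟩
    refine ⟨?_, ?_⟩
    · rw [show (1-p)*(a+b)*p = (1-p)*a*p + (1-p)*b*p by noncomm_ring, ha1, hb1, add_zero]
    · rw [show p*(a+b)*p + (1-p)*(a+b)*(1-p)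
          = (p*a*p + (1-p)*a*(1-p)) + (p*b*p + (1-p)*b*(1-p)) by noncomm_ring]
      exact S.add_mem ha2 hb2
  zero_mem' := ⟨by simp, by simpa using S.zero_mem⟩
  algebraMap_mem' := by
    intro c
    have h1 : (1-p) * (algebraMap ℂ (H →L[ℂ] H) c) * p = c • ((1-p) * p) := by
      simp [Algebra.algebraMap_eq_smul_one]
    have h2 : (1-p) * p = 0 := by
      simp only [sub_mul, one_mul, hpr]; abel
    refine ⟨by rw [h1, h2, smul_zero], ?_⟩
    have h3 : p*(algebraMap ℂ (H →L[ℂ] H) c)*p + (1-p)*(algebraMap ℂ (H →L[ℂ] H) c)*(1-p)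
        = c • (p*p) + c • ((1-p)*(1-p)) := by
      simp [Algebra.algebraMap_eq_smul_one]
    have h4 : (1-p)*(1-p) = 1-p := by
      simp only [mul_sub, sub_mul, one_mul, mul_one, hpr]; abel
    rw [h3, hpr, h4, show c • p + c • (1-p) = c • (1:H →L[ℂ] H) by rw [← smul_add]; congr 1; abel]
    exact S.smul_mem S.one_mem c

lemma mem_Talg {S : Subalgebra ℂ (H →L[ℂ] H)} {p : H →L[ℂ] H} {hpr : p * p = p}
    {a : H →L[ℂ] H} :
    a ∈ Talg S p hpr ↔ (1-p) * a * p = 0 ∧ p*a*p + (1-p)*a*(1-p) ∈ S := Iff.rfl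

lemma adjoint_mul2 (a b : H →L[ℂ] H) :
    adjoint (a * b) = adjoint b * adjoint a := by
  simp [← star_eq_adjoint, star_mul]

lemma adjoint_mul3 (a b c : H →L[ℂ] H) :
    adjoint (a * b * c) = adjoint c * adjoint b * adjoint a := by
  simp [← star_eq_adjoint, star_mul, mul_assoc]

lemma norm_proj_apply_le {p : H →L[ℂ] H} (hpr : p * p = p) (hpa : adjoint p = p) (z : H) :
    ‖p z‖ ≤ ‖z‖ := by
  by_cases h0 : ‖p z‖ = 0
  · rw [h0]; exact norm_nonneg z
  · have hppz : p (p z) = p z := by rw [← ContinuousLinearMap.mul_apply, hpr]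
    have key : (⟪p z, p z⟫) = ⟪z, p z⟫ := by
      nth_rewrite 1 [← hpa]
      rw [adjoint_inner_left, hppz]
    have h1 : ‖p z‖ * ‖p z‖ ≤ ‖z‖ * ‖p z‖ := by
      calc ‖p z‖ * ‖p z‖ = RCLike.re (⟪p z, p z⟫) := (inner_self_eq_norm_mul_norm _).symm
        _ = RCLike.re (⟪z, p z⟫) := by rw [key]
        _ ≤ ‖(⟪z, p z⟫)‖ := RCLike.re_le_norm _
        _ ≤ ‖z‖ * ‖p z‖ := norm_inner_le_norm _ _
    exact le_of_mul_le_mul_right h1 (lt_of_le_of_ne (norm_nonneg _) (Ne.symm h0))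

end Aux

open ContinuousLinearMap in
/-- (Lemma 6.) For a bounded derivation `δ` on a maximal triangular algebra `S` and a
nontrivial `p ∈ lat(S)`, there is `b₁ ∈ B(H)` with `b₁ p⊥ = 0`, `‖b₁‖ ≤ ‖δ‖`, and
`δ(a) p = (b₁ a - a b₁) p` for all `a ∈ S`. -/
theorem deriv_implemented_on_p {H : Type*} [NormedAddCommGroup H] [InnerProductSpace ℂ H]
    [CompleteSpace H] {S : Subalgebra ℂ (H →L[ℂ] H)} (hS : IsMaxTriangular S)
    (δ : S →L[ℂ] (H →L[ℂ] H)) (hδ : IsDerivation S δ)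
    {p : H →L[ℂ] H} (hp : InLat S p) (hp0 : p ≠ 0) (hp1 : p ≠ 1) :
    ∃ b₁ : H →L[ℂ] H, b₁ * (1 - p) = 0 ∧ ‖b₁‖ ≤ ‖δ‖ ∧
      ∀ a : S, δ a * p = (b₁ * (a : H →L[ℂ] H) - (a : H →L[ℂ] H) * b₁) * p := by
  classical
  obtain ⟨hpr, hpa, hlat⟩ := hp
  -- p belongs to the diagonal of S, hence to S
  have hpD : p ∈ diagonal S := by
    apply hS.1.2
    rintro d ⟨hd, hd'⟩
    have h1 : d * p = p * d * p := hlat d hd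
    have h2 : adjoint d * p = p * adjoint d * p := hlat _ hd'
    have h3 : p * d = p * d * p := by
      have := congrArg adjoint h2
      rwa [adjoint_mul2, adjoint_mul3, hpa, adjoint_adjoint] at this
    rw [h1, ← h3]
  have hpS : p ∈ S := hpD.1
  have hqS : (1 : H →L[ℂ] H) - p ∈ S := S.sub_mem S.one_mem hpS
  -- a p = p a p implies (1-p) a p = 0 for a in S
  have hqsp : ∀ s ∈ S, ((1:H →L[ℂ] H)-p) * s * p = 0 := by
    intro s hs
    rw [sub_mul, sub_mul, one_mul, hlat s hs, sub_self]
  -- S ≤ Talg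
  have hSle : S ≤ Talg S p hpr := by
    intro s hs
    refine ⟨hqsp s hs, ?_⟩
    have hdec : p*s*p + (1-p)*s*(1-p) = s - p*s*(1-p) - (1-p)*s*p := by noncomm_ring
    rw [hdec, hqsp s hs, sub_zero]
    exact S.sub_mem hs (S.mul_mem (S.mul_mem hpS hs) hqS)
  -- diagonal of Talg equals diagonal of S
  have hdiag : diagonal (Talg S p hpr) = diagonal S := by
    ext a
    constructor
    · rintro ⟨⟨ha1, ha2⟩, ⟨hb1, hb2⟩⟩
      have hadjq : adjoint ((1:H →L[ℂ] H) - p) = 1 - p := by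
        rw [← star_eq_adjoint, star_sub, star_one, star_eq_adjoint, hpa]
      have hadj0 : adjoint (0 : H →L[ℂ] H) = 0 := by
        rw [← star_eq_adjoint, star_zero]
      have hpaq : p * a * (1-p) = 0 := by
        have := congrArg adjoint hb1
        rwa [adjoint_mul3, hpa, adjoint_adjoint, hadj0, hadjq] at this
      have hdeca : a = (p*a*p + (1-p)*a*(1-p)) + p*a*(1-p) + (1-p)*a*p := by noncomm_ring
      have haS : a ∈ S := by
        rw [hdeca, ha1, hpaq, add_zero, add_zero]; exact ha2
      have hpaq' : p * adjoint a * (1-p) = 0 := by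
        have := congrArg adjoint ha1
        rwa [adjoint_mul3, hpa, hadj0, hadjq] at this
      have hdecb : adjoint a
          = (p*(adjoint a)*p + (1-p)*(adjoint a)*(1-p)) + p*(adjoint a)*(1-p)
            + (1-p)*(adjoint a)*p := by noncomm_ring
      have hbS : adjoint a ∈ S := by
        rw [hdecb, hb1, hpaq', add_zero, add_zero]; exact hb2
      exact ⟨haS, hbS⟩
    · rintro ⟨ha, hb⟩
      exact ⟨hSle ha, hSle hb⟩
  -- maximality: S = Talg
  have hST : S = Talg S p hpr := by
    apply hS.2 _ _ hSle
    unfold IsTriangular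
    rw [hdiag]
    exact hS.1
  -- choose a unit vector f in the range of 1-p
  have hq0 : (1 : H →L[ℂ] H) - p ≠ 0 := fun h => hp1 (by rw [← sub_eq_zero]; rwa [← neg_sub,
    neg_eq_zero] at h)
  obtain ⟨z₀, hz₀⟩ : ∃ z, ((1:H →L[ℂ] H) - p) z ≠ 0 := by
    by_contra hcon
    push_neg at hcon
    exact hq0 (ContinuousLinearMap.ext fun z => by rw [hcon z]; rfl)
  set g : H := ((1:H →L[ℂ] H) - p) z₀ with hg
  set f : H := ‖g‖⁻¹ • g with hf
  have hfn : ‖f‖ = 1 := norm_smul_inv_norm hz₀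
  have hpf : p f = 0 := by
    have hpg : p g = 0 := by
      have : p * ((1:H →L[ℂ] H) - p) = 0 := by
        rw [mul_sub, mul_one, hpr, sub_self]
      calc p g = (p * ((1:H →L[ℂ] H) - p)) z₀ := rfl
        _ = 0 := by rw [this]; rfl
    rw [hf, map_smul_of_tower, hpg, smul_zero]
  have hff : (inner ℂ f f : ℂ) = 1 := by
    rw [inner_self_eq_norm_sq_to_K, hfn]; norm_num
  -- rank one operators
  set r : H → (H →L[ℂ] H) := fun x => (innerSL ℂ f).smulRight x with hr
  have hr_apply : ∀ x w, r x w = (inner ℂ f w : ℂ) • x := fun x w => rfl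
  have hr_memS : ∀ x, p x = x → r x ∈ S := by
    intro x hx
    rw [hST]
    have hrp : r x * p = 0 := by
      ext w
      rw [ContinuousLinearMap.mul_apply, hr_apply, ← adjoint_inner_left, hpa, hpf]
      simp
    have hqr : ((1:H →L[ℂ] H)-p) * r x = 0 := by
      ext w
      rw [ContinuousLinearMap.mul_apply, hr_apply, map_smul]
      rw [ContinuousLinearMap.sub_apply, ContinuousLinearMap.one_apply, hx, sub_self, smul_zero]
      rfl
    refine ⟨by rw [mul_assoc, hrp, mul_zero], ?_⟩
    rw [show p * r x * p = p * (r x * p) by rw [mul_assoc], hrp, mul_zero]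
    rw [show ((1:H →L[ℂ] H)-p) * r x * (1-p) = (((1:H →L[ℂ] H)-p) * r x) * (1-p) from rfl, hqr,
      zero_mul, add_zero]
    exact S.zero_mem
  have hppx : ∀ z : H, p (p z) = p z := fun z => by rw [← ContinuousLinearMap.mul_apply, hpr]
  -- the S-valued assignment
  have hmem : ∀ z : H, r (p z) ∈ S := fun z => hr_memS (p z) (hppx z)
  set R : H → S := fun z => ⟨r (p z), hmem z⟩ with hR
  -- linear map b₁
  have hr_add : ∀ x y : H, r (x + y) = r x + r y := by
    intro x y; ext w; simp [hr_apply, smul_add]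
  have hr_smul : ∀ (c : ℂ) (x : H), r (c • x) = c • r x := by
    intro c x; ext w
    rw [ContinuousLinearMap.smul_apply, hr_apply, hr_apply, smul_comm]
  have hR_add : ∀ x y : H, R (x + y) = R x + R y := by
    intro x y
    apply Subtype.ext
    show r (p (x + y)) = r (p x) + r (p y)
    rw [map_add, hr_add]
  have hR_smul : ∀ (c : ℂ) (x : H), R (c • x) = c • R x := by
    intro c x
    apply Subtype.ext
    show r (p (c • x)) = c • r (p x)
    rw [map_smul, hr_smul]
  set b₁lin : H →ₗ[ℂ] H :=
    { toFun := fun z => δ (R z) f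
      map_add' := fun x y => by
        show δ (R (x + y)) f = δ (R x) f + δ (R y) f
        have h1 : δ (R (x + y)) = δ (R x) + δ (R y) := by rw [hR_add, map_add]
        rw [h1]; rfl
      map_smul' := fun c x => by
        show δ (R (c • x)) f = c • δ (R x) f
        have h1 : δ (R (c • x)) = c • δ (R x) := by rw [hR_smul, map_smul]
        rw [h1]; rfl } with hb₁lin
  have hnormRz : ∀ z : H, ‖(R z : H →L[ℂ] H)‖ = ‖p z‖ := by
    intro z
    show ‖r (p z)‖ = ‖p z‖
    rw [hr, norm_smulRight_apply, innerSL_apply_norm, hfn, one_mul]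
  have hbound : ∀ z : H, ‖b₁lin z‖ ≤ ‖δ‖ * ‖z‖ := by
    intro z
    calc ‖δ (R z) f‖ ≤ ‖δ (R z)‖ * ‖f‖ := le_opNorm _ _
      _ = ‖δ (R z)‖ := by rw [hfn, mul_one]
      _ ≤ ‖δ‖ * ‖R z‖ := le_opNorm _ _
      _ = ‖δ‖ * ‖p z‖ := by rw [show ‖R z‖ = ‖(R z : H →L[ℂ] H)‖ from rfl, hnormRz]
      _ ≤ ‖δ‖ * ‖z‖ := by
          exact mul_le_mul_of_nonneg_left (norm_proj_apply_le hpr hpa z) (norm_nonneg δ)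
  set b₁ : H →L[ℂ] H := b₁lin.mkContinuous ‖δ‖ hbound with hb₁
  have hb₁_apply : ∀ z, b₁ z = δ (R z) f := fun z => rfl
  refine ⟨b₁, ?_, ?_, ?_⟩
  · -- b₁ (1-p) = 0
    ext z
    have hz : p (((1:H →L[ℂ] H) - p) z) = 0 := by
      rw [ContinuousLinearMap.sub_apply, ContinuousLinearMap.one_apply, map_sub, hppx, sub_self]
    have hR0 : R (((1:H →L[ℂ] H) - p) z) = 0 := by
      apply Subtype.ext
      show r (p (((1:H →L[ℂ] H) - p) z)) = 0
      rw [hz]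
      ext w; simp [hr_apply]
    rw [ContinuousLinearMap.mul_apply, hb₁_apply, hR0, map_zero]
    rfl
  · exact b₁lin.mkContinuous_norm_le (norm_nonneg δ) hbound
  · intro a
    ext z
    -- key derivation identity
    have haps : p ((a : H →L[ℂ] H) (p z)) = (a : H →L[ℂ] H) (p z) := by
      have h := hlat (a : H →L[ℂ] H) a.2
      have : p * ((a : H →L[ℂ] H) * p) = (a : H →L[ℂ] H) * p := by
        rw [h, ← mul_assoc, ← mul_assoc, hpr]
      calc p ((a : H →L[ℂ] H) (p z)) = (p * ((a : H →L[ℂ] H) * p)) z := rfl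
        _ = ((a : H →L[ℂ] H) * p) z := by rw [this]
        _ = (a : H →L[ℂ] H) (p z) := rfl
    have hmul : a * R z = R ((a : H →L[ℂ] H) (p z)) := by
      apply Subtype.ext
      show (a : H →L[ℂ] H) * r (p z) = r (p ((a : H →L[ℂ] H) (p z)))
      rw [haps]
      ext w
      rw [ContinuousLinearMap.mul_apply, hr_apply, hr_apply, map_smul]
    have hder := hδ a (R z)
    have happ := congrArg (fun T : H →L[ℂ] H => T f) hder
    simp only [ContinuousLinearMap.add_apply, ContinuousLinearMap.mul_apply] at happ
    have hrf : (R z : H →L[ℂ] H) f = p z := by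
      show r (p z) f = p z
      rw [hr_apply, hff, one_smul]
    rw [hmul, hrf] at happ
    -- happ : δ (R (a (p z))) f = δ a (p z) + a (δ (R z) f)
    have hb₁pz : b₁ (p z) = b₁ z := by
      rw [hb₁_apply, hb₁_apply]
      congr 2
      apply Subtype.ext
      show r (p (p z)) = r (p z)
      rw [hppx]
    show (δ a) (p z) = ((b₁ * (a : H →L[ℂ] H) - (a : H →L[ℂ] H) * b₁)) (p z)
    rw [ContinuousLinearMap.sub_apply, ContinuousLinearMap.mul_apply,
      ContinuousLinearMap.mul_apply, hb₁pz]
    have : b₁ ((a : H →L[ℂ] H) (p z)) = δ (R ((a : H →L[ℂ] H) (p z))) f := rfl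
    rw [this, happ, hb₁_apply]
    abel
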